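/- Let P be a poset with binary meets equipped with a Grothendieck pretopology. The propositional sheafification functor, sending a downward closed subset F of P to its closure under coverings, preserves finite meets (intersections) of downward closed subsets. -/
import Mathlib


/-- A Grothendieck pretopology on a poset `P` with binary meets: to each `p : P` we
assign a collection `Cov p` of subsets of `{q | q ≤ p}` called coverings, satisfying
identities, stability under base change, and locality. -/
structure PosetPretopology (P : Type*) [SemilatticeInf P] where
  Cov : P → Set (Set P)
  le_of_mem : ∀ p S, S ∈ Cov p → ∀ q ∈ S, q ≤ p
  id_mem : ∀ p : P, ({p} : Set P) ∈ Cov p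
  base_change : ∀ p q S, S ∈ Cov p → q ≤ p → ((fun r => r ⊓ q) '' S) ∈ Cov q
  locality : ∀ p S, S ∈ Cov p → ∀ T : P → Set P, (∀ s ∈ S, T s ∈ Cov s) →
      (⋃ s ∈ S, T s) ∈ Cov p

/-- The propositional sheafification of a downward closed subset:
its closure under coverings. -/
def sheafify {P : Type*} [SemilatticeInf P] (J : PosetPretopology P) (F : Set P) : Set P :=
  {p | ∃ S ∈ J.Cov p, S ⊆ F}

/-- The propositional sheafification functor preserves finite meets (intersections)
of downward closed subsets: it preserves the top element and binary intersections. -/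
theorem sheafify_preserves_finite_meets {P : Type*} [SemilatticeInf P]
    (J : PosetPretopology P) :
    sheafify J (Set.univ : Set P) = Set.univ ∧
    ∀ F G : Set P, IsLowerSet F → IsLowerSet G →
      sheafify J (F ∩ G) = sheafify J F ∩ sheafify J G := by
  constructor
  · ext p
    simp only [Set.mem_univ, iff_true]
    exact ⟨{p}, J.id_mem p, Set.subset_univ _⟩
  · intro F G hF hG
    ext p
    constructor
    · rintro ⟨S, hS, hSF⟩
      exact ⟨⟨S, hS, fun s hs => (hSF hs).1⟩, ⟨S, hS, fun s hs => (hSF hs).2⟩⟩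
    · rintro ⟨⟨S, hS, hSF⟩, ⟨T, hT, hTG⟩⟩
      refine ⟨⋃ s ∈ S, (fun r => r ⊓ s) '' T, J.locality p S hS _
        (fun s hs => J.base_change p s T hT (J.le_of_mem p S hS s hs)), ?_⟩
      rintro x hx
      simp only [Set.mem_iUnion] at hx
      obtain ⟨s, hs, t, ht, rfl⟩ := hx
      exact ⟨hF inf_le_right (hSF hs), hG inf_le_left (hTG ht)⟩
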